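/- arXiv:2309.04829 — 2 statements merged into one kernel-verified Lean document; each statement's English description precedes it below -/
import Mathlib

section
/- (Kilmoyer) Let W be a finite Weyl group (or more generally a Coxeter group) with simple reflections indexed by Δ, and let P, Q ⊆ Δ. If d is the minimal length element of a double coset W_P d W_Q (equivalently d(Q) ⊆ R⁺ and d⁻¹(P) ⊆ R⁺), then W_P ∩ d W_Q d⁻¹ = W_{P ∩ d(Q)}. -/
set_option linter.unusedSectionVars false

namespace KilmoyerAux

open CoxeterSystem List

open scoped Classical

private lemma zmod2_self (a : ZMod 2) : a + a = 0 := CharTwo.add_self_eq_zero a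

private lemma sum_range_pair (f : ℕ → ZMod 2) (m : ℕ) :
    ∑ l ∈ Finset.range m, (f (2 * l) + f (2 * l + 1)) = ∑ z ∈ Finset.range (2 * m), f z := by
  induction m with
  | zero => simp
  | succ m ih =>
      rw [Finset.sum_range_succ, ih, Nat.mul_succ, show 2 * m + 2 = (2 * m + 1) + 1 by ring,
        Finset.sum_range_succ, Finset.sum_range_succ, add_assoc]

private lemma sum_range_split (f : ℕ → ZMod 2) (a b : ℕ) :
    ∑ z ∈ Finset.range (a + b), f z
      = (∑ z ∈ Finset.range a, f z) + ∑ z ∈ Finset.range b, f (a + z) := by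
  induction b with
  | zero => simp
  | succ b ih => rw [← Nat.add_assoc, Finset.sum_range_succ, ih, Finset.sum_range_succ, add_assoc]

private lemma conj_sum_even {G : Type*} [Group G] (p r : G) (hr : r * r = 1)
    (hrp : r * p * r = p⁻¹) {m : ℕ} (hm : 0 < m) (hpm : p ^ m = 1) (t : G) :
    ∑ l ∈ Finset.range m,
      ((if p ^ l * t * (p ^ l)⁻¹ = r then (1 : ZMod 2) else 0)
        + if p ^ l * t * (p ^ l)⁻¹ = p⁻¹ * r then (1 : ZMod 2) else 0) = 0 := by
  have hrinv : r⁻¹ = r := inv_eq_of_mul_eq_one_right hr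
  have hconj : ∀ z : ℤ, r * p ^ z * r = p ^ (-z) := by
    intro z
    have : (r * p * r⁻¹) ^ z = r * p ^ z * r⁻¹ := conj_zpow
    rw [hrinv] at this
    rw [this.symm, hrp, inv_zpow, zpow_neg]
  have hform : ∀ (l : ℕ) (b : ℤ), p ^ l * (p ^ b * r) * (p ^ l)⁻¹ = p ^ (b + 2 * l) * r := by
    intro l b
    have h1 : (p ^ l)⁻¹ = p ^ (-(l:ℤ)) := by rw [← zpow_natCast, ← zpow_neg]
    have h2 : r * p ^ (-(l:ℤ)) = p ^ (l:ℤ) * r := by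
      have h3 := hconj (-(l:ℤ))
      rw [neg_neg] at h3
      calc r * p ^ (-(l:ℤ)) = r * p ^ (-(l:ℤ)) * r * r := by rw [mul_assoc _ r r, hr, mul_one]
        _ = p ^ (l:ℤ) * r := by rw [h3]
    rw [h1, mul_assoc, mul_assoc, h2, ← mul_assoc, ← mul_assoc, ← zpow_natCast p l,
      ← zpow_add, ← zpow_add]
    ring_nf
  by_cases hex : ∃ b : ℤ, t = p ^ b * r
  · obtain ⟨b, rfl⟩ := hex
    have hfin : IsOfFinOrder p := isOfFinOrder_iff_pow_eq_one.mpr ⟨m, hm, hpm⟩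
    have hnm : orderOf p ∣ m := orderOf_dvd_of_pow_eq_one hpm
    set g : ℕ → ZMod 2 := fun z => if (orderOf p : ℤ) ∣ b + z then (1 : ZMod 2) else 0
      with hgdef
    have key : ∀ l : ℕ,
        ((if p ^ l * (p ^ b * r) * (p ^ l)⁻¹ = r then (1 : ZMod 2) else 0)
          + if p ^ l * (p ^ b * r) * (p ^ l)⁻¹ = p⁻¹ * r then (1 : ZMod 2) else 0)
        = g (2 * l) + g (2 * l + 1) := by
      intro l
      rw [hform l b, hgdef]
      congr 1
      · simp only []
        congr 1
        rw [eq_iff_iff]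
        push_cast
        constructor
        · intro h
          have h2 : p ^ (b + 2 * (l:ℤ)) * r = 1 * r := by rw [h, one_mul]
          exact orderOf_dvd_iff_zpow_eq_one.mpr (mul_right_cancel h2)
        · intro h
          rw [orderOf_dvd_iff_zpow_eq_one.mp h, one_mul]
      · simp only []
        congr 1
        rw [eq_iff_iff]
        push_cast
        constructor
        · intro h
          have h2 : p ^ (b + 2 * (l:ℤ)) = p⁻¹ := mul_right_cancel h
          apply orderOf_dvd_iff_zpow_eq_one.mpr
          rw [show (b + (2 * (l:ℤ) + 1) : ℤ) = (b + 2 * l) + 1 by ring, zpow_add, zpow_one, h2,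
            inv_mul_cancel]
        · intro h
          have h1 : p ^ (b + (2 * (l:ℤ) + 1)) = 1 := orderOf_dvd_iff_zpow_eq_one.mp h
          have h2 : p ^ (b + 2 * (l:ℤ)) * p = 1 := by
            have h3 : p ^ (b + 2 * (l:ℤ)) * p ^ (1:ℤ) = 1 := by
              rw [← zpow_add, show (b + 2 * (l:ℤ) + 1 : ℤ) = b + (2 * l + 1) by ring, h1]
            rwa [zpow_one] at h3
          rw [← inv_eq_of_mul_eq_one_left h2]
    rw [Finset.sum_congr rfl (fun l _ => key l), sum_range_pair g m,
      show 2 * m = m + m by ring, sum_range_split, ← Finset.sum_add_distrib]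
    apply Finset.sum_eq_zero
    intro z _
    have hgz : g (m + z) = g z := by
      rw [hgdef]
      simp only []
      have hdm : (orderOf p : ℤ) ∣ (m:ℤ) := Int.natCast_dvd_natCast.mpr hnm
      have hiff : ((orderOf p : ℤ) ∣ b + ((m + z : ℕ) : ℤ)) ↔ ((orderOf p : ℤ) ∣ b + (z:ℕ)) := by
        push_cast
        constructor
        · intro h
          have h2 := dvd_sub h hdm
          simpa [show b + ((m:ℤ) + z) - m = b + z by ring] using h2
        · intro h
          have h2 := dvd_add h hdm
          simpa [show b + (z:ℤ) + m = b + ((m:ℤ) + z) by ring] using h2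
      exact if_congr hiff rfl rfl
    rw [hgz]
    exact zmod2_self _
  · apply Finset.sum_eq_zero
    intro l _
    push_neg at hex
    have h1 : (p ^ l)⁻¹ = p ^ (-(l:ℤ)) := by rw [← zpow_natCast, ← zpow_neg]
    rw [if_neg, if_neg, add_zero]
    · intro h
      apply hex (-(2 * l) - 1)
      have h2 : t = (p^l)⁻¹ * (p⁻¹ * r) * p ^ l := by
        rw [← h]; group
      rw [h2, h1, ← zpow_natCast p l, ← zpow_neg_one]
      rw [show (p ^ (-(l:ℤ)) * (p ^ (-1:ℤ) * r) * p ^ (l:ℤ)) =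
        p ^ (-(l:ℤ) + -1) * (r * p ^ (l:ℤ) * r) * r by
          rw [zpow_add]; group
          rw [mul_assoc _ r r, hr, mul_one]
        , hconj]
      rw [← zpow_add]
      congr 1
      ring_nf
    · intro h
      apply hex (-(2 * l))
      have h2 : t = (p^l)⁻¹ * r * p ^ l := by
        rw [← h]; group
      rw [h2, h1, ← zpow_natCast p l]
      rw [show (p ^ (-(l:ℤ)) * r * p ^ (l:ℤ)) = p ^ (-(l:ℤ)) * (r * p ^ (l:ℤ) * r) * r by
          group
          rw [mul_assoc _ r r, hr, mul_one],
        hconj, ← zpow_add]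
      congr 1
      ring_nf


section ExchangeProperty

variable {B W : Type*} [Group W] {M : CoxeterMatrix B} (cs : CoxeterSystem M W)

local prefix:100 "π" => cs.wordProd

/-- The function underlying the permutation representation on `W × ZMod 2`. -/
noncomputable def etaFun (i : B) : W × ZMod 2 → W × ZMod 2 :=
  fun x => (cs.simple i * x.1 * cs.simple i, x.2 + if x.1 = cs.simple i then 1 else 0)

lemma etaFun_invol (i : B) (x : W × ZMod 2) : etaFun cs i (etaFun cs i x) = x := by
  obtain ⟨w, e⟩ := x
  simp only [etaFun, Prod.mk.injEq]
  constructor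
  · simp [mul_assoc, cs.simple_mul_simple_cancel_left, cs.simple_mul_simple_self]
  · have hcond : (cs.simple i * w * cs.simple i = cs.simple i) ↔ (w = cs.simple i) := by
      constructor
      · intro h
        have h2 : w = cs.simple i * (cs.simple i * w * cs.simple i) * cs.simple i := by
          simp [mul_assoc, cs.simple_mul_simple_cancel_left, cs.simple_mul_simple_self]
        rw [h2, h]
        simp [mul_assoc, cs.simple_mul_simple_cancel_left, cs.simple_mul_simple_self]
      · intro h
        rw [h]
        simp [mul_assoc, cs.simple_mul_simple_cancel_left, cs.simple_mul_simple_self]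
    simp only [hcond]
    rw [add_assoc]
    rw [zmod2_self, add_zero]

/-- The permutation representation on `W × ZMod 2`. -/
noncomputable def eta (i : B) : Equiv.Perm (W × ZMod 2) :=
  ⟨etaFun cs i, etaFun cs i, etaFun_invol cs i, etaFun_invol cs i⟩

lemma eta_apply (i : B) (x : W × ZMod 2) :
    eta cs i x = (cs.simple i * x.1 * cs.simple i, x.2 + if x.1 = cs.simple i then 1 else 0) :=
  rfl

lemma eta_liftable : M.IsLiftable (eta cs) := by
  intro i j
  rcases Nat.eq_zero_or_pos (M i j) with h0 | hpos
  · rw [h0, pow_zero]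
  · have hpow : ∀ (k : ℕ) (x : W × ZMod 2), ((eta cs i * eta cs j) ^ k) x
        = ((cs.simple i * cs.simple j) ^ k * x.1 * ((cs.simple i * cs.simple j) ^ k)⁻¹,
           x.2 + ∑ l ∈ Finset.range k,
             ((if (cs.simple i * cs.simple j) ^ l * x.1 * ((cs.simple i * cs.simple j) ^ l)⁻¹
                  = cs.simple j then (1 : ZMod 2) else 0)
               + if (cs.simple i * cs.simple j) ^ l * x.1
                    * ((cs.simple i * cs.simple j) ^ l)⁻¹
                  = (cs.simple i * cs.simple j)⁻¹ * cs.simple j then (1 : ZMod 2) else 0)) := by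
      intro k
      induction k with
      | zero => intro x; simp
      | succ k ih =>
          intro x
          rw [pow_succ' (eta cs i * eta cs j) k, Equiv.Perm.mul_apply, ih x,
            Equiv.Perm.mul_apply, eta_apply, eta_apply]
          simp only [Prod.mk.injEq]
          constructor
          · simp [pow_succ', mul_assoc, mul_inv_rev, cs.inv_simple]
          · rw [Finset.sum_range_succ]
            have hiff : ∀ c : W, (cs.simple j * c * cs.simple j = cs.simple i)
                ↔ (c = (cs.simple i * cs.simple j)⁻¹ * cs.simple j) := by
              intro c
              rw [mul_inv_rev, cs.inv_simple, cs.inv_simple]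
              constructor
              · intro h
                have h2 : c = cs.simple j * (cs.simple j * c * cs.simple j) * cs.simple j := by
                  simp [mul_assoc, cs.simple_mul_simple_cancel_left, cs.simple_mul_simple_self]
                rw [h2, h, mul_assoc]
              · intro h
                rw [h]
                simp [mul_assoc, cs.simple_mul_simple_cancel_left, cs.simple_mul_simple_self]
            rw [if_congr (hiff _) rfl rfl]
            ring
    apply Equiv.ext
    intro x
    have h1 := hpow (M i j) x
    rw [cs.simple_mul_simple_pow i j] at h1
    rw [h1]
    rw [conj_sum_even (cs.simple i * cs.simple j) (cs.simple j)
      (cs.simple_mul_simple_self j) ?_ hpos (cs.simple_mul_simple_pow i j) x.1]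
    · simp
    · rw [mul_inv_rev, cs.inv_simple, cs.inv_simple]
      simp [mul_assoc, cs.simple_mul_simple_self]

/-- The homomorphism from `W` to the permutation group of `W × ZMod 2`. -/
noncomputable def phi : W →* Equiv.Perm (W × ZMod 2) :=
  cs.lift ⟨eta cs, eta_liftable cs⟩

lemma phi_simple (i : B) : phi cs (cs.simple i) = eta cs i :=
  cs.lift_apply_simple (eta_liftable cs) i

/-- Parity count of occurrences in a list. -/
noncomputable def cnt (t : W) (l : List W) : ZMod 2 := (l.map (fun u => if t = u then (1:ZMod 2) else 0)).sum

lemma cnt_cons (t u : W) (l : List W) :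
    cnt t (u :: l) = (if t = u then 1 else 0) + cnt t l := rfl

lemma cnt_concat (t u : W) (l : List W) :
    cnt t (l.concat u) = cnt t l + (if t = u then 1 else 0) := by
  simp [cnt]

lemma cnt_ne_zero_mem {t : W} {l : List W} (h : cnt t l ≠ 0) : t ∈ l := by
  induction l with
  | nil => exact absurd rfl h
  | cons u l ih =>
      by_cases htu : t = u
      · rw [htu]; exact List.mem_cons_self
      · rw [cnt_cons, if_neg htu, zero_add] at h
        exact List.mem_cons_of_mem u (ih h)

lemma cnt_eq_zero_of_not_mem {t : W} {l : List W} (h : t ∉ l) : cnt t l = 0 := by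
  induction l with
  | nil => rfl
  | cons u l ih =>
      have ht : t ≠ u := fun he => h (by rw [he]; exact List.mem_cons_self)
      rw [cnt_cons, if_neg ht, zero_add]
      exact ih (fun hm => h (List.mem_cons_of_mem u hm))

lemma phi_wordProd (ω : List B) (x : W × ZMod 2) :
    phi cs (π ω) x = (π ω * x.1 * (π ω)⁻¹, x.2 + cnt x.1 (cs.rightInvSeq ω)) := by
  induction ω generalizing x with
  | nil => simp [cnt, cs.wordProd_nil]
  | cons i ω ih =>
      rw [cs.wordProd_cons, map_mul, Equiv.Perm.mul_apply, ih x, phi_simple, eta_apply]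
      have hris : cs.rightInvSeq (i :: ω) = ((π ω)⁻¹ * cs.simple i * π ω) :: cs.rightInvSeq ω :=
        rfl
      rw [hris, cnt_cons]
      simp only [Prod.mk.injEq]
      constructor
      · rw [mul_inv_rev, cs.inv_simple]
        group
      · have hiff : (π ω * x.1 * (π ω)⁻¹ = cs.simple i)
            ↔ (x.1 = (π ω)⁻¹ * cs.simple i * π ω) := by
          constructor
          · intro h; rw [← h]; group
          · intro h; rw [h]; group
        rw [if_congr hiff rfl rfl]
        ring

lemma right_exchange {ω : List B} {i : B} (hω : cs.IsReduced ω)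
    (h : cs.length (π ω * cs.simple i) < cs.length (π ω)) :
    ∃ j < ω.length, π ω * cs.simple i = π (ω.eraseIdx j) := by
  obtain ⟨τ, hτred, hτ⟩ := cs.exists_reduced_word' (π ω * cs.simple i)
  have hπ : π (τ.concat i) = π ω := by
    rw [cs.wordProd_concat, ← hτ, cs.simple_mul_simple_cancel_right]
  have hnotmem : cs.simple i ∉ cs.rightInvSeq τ := by
    intro hmem
    have hinv := (cs.isRightInversion_of_mem_rightInvSeq hτred hmem).2
    rw [← hτ, cs.simple_mul_simple_cancel_right] at hinv
    omega
  have hcnt1 : cnt (cs.simple i) (cs.rightInvSeq (τ.concat i)) = 1 := by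
    rw [cs.rightInvSeq_concat, cnt_concat]
    have hz : cnt (cs.simple i) ((cs.rightInvSeq τ).map (MulAut.conj (cs.simple i))) = 0 := by
      apply cnt_eq_zero_of_not_mem
      intro hmem
      obtain ⟨u, hu, hconj⟩ := List.mem_map.mp hmem
      have hu2 : u = cs.simple i := by
        simp only [MulAut.conj_apply, cs.inv_simple] at hconj
        have h2 : u = cs.simple i * (cs.simple i * u * cs.simple i) * cs.simple i := by
          simp [mul_assoc, cs.simple_mul_simple_cancel_left, cs.simple_mul_simple_self]
        rw [h2, hconj]
        simp [mul_assoc, cs.simple_mul_simple_cancel_left, cs.simple_mul_simple_self]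
      exact hnotmem (hu2 ▸ hu)
    rw [hz, if_pos rfl, zero_add]
  have hparity : cnt (cs.simple i) (cs.rightInvSeq ω) = 1 := by
    have h1 := phi_wordProd cs ω (cs.simple i, (0 : ZMod 2))
    have h2 := phi_wordProd cs (τ.concat i) (cs.simple i, (0 : ZMod 2))
    rw [hπ, h1] at h2
    have h3 := congrArg Prod.snd h2
    simp only [zero_add] at h3
    rw [h3, hcnt1]
  have hmem : cs.simple i ∈ cs.rightInvSeq ω :=
    cnt_ne_zero_mem (by rw [hparity]; exact one_ne_zero)
  obtain ⟨j, hj, hje⟩ := List.mem_iff_getElem.mp hmem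
  have hjlen : j < ω.length := by
    rw [cs.length_rightInvSeq] at hj
    exact hj
  refine ⟨j, hjlen, ?_⟩
  have h4 := cs.wordProd_mul_getD_rightInvSeq ω j
  rw [List.getD_eq_getElem _ _ hj, hje] at h4
  exact h4

end ExchangeProperty


section Words

variable {B W : Type*} [Group W] {M : CoxeterMatrix B} (cs : CoxeterSystem M W)

local prefix:100 "π" => cs.wordProd

lemma wordProd_mem_closure {P : Set B} {ω : List B} (hω : ∀ i ∈ ω, i ∈ P) :
    π ω ∈ Subgroup.closure (cs.simple '' P) := by
  induction ω with
  | nil => rw [cs.wordProd_nil]; exact Subgroup.one_mem _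
  | cons i ω ih =>
      rw [cs.wordProd_cons]
      exact Subgroup.mul_mem _
        (Subgroup.subset_closure ⟨i, hω i (List.mem_cons_self), rfl⟩)
        (ih (fun j hj => hω j (List.mem_cons_of_mem i hj)))

lemma exists_word_of_mem_closure {P : Set B} {w : W}
    (hw : w ∈ Subgroup.closure (cs.simple '' P)) :
    ∃ ω : List B, (∀ i ∈ ω, i ∈ P) ∧ w = π ω := by
  induction hw using Subgroup.closure_induction with
  | mem x hx =>
      obtain ⟨i, hi, rfl⟩ := hx
      exact ⟨[i], by simpa using hi, (cs.wordProd_singleton i).symm⟩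
  | one => exact ⟨[], by simp, (cs.wordProd_nil).symm⟩
  | mul x y hx hy ihx ihy =>
      obtain ⟨ω₁, h₁, rfl⟩ := ihx
      obtain ⟨ω₂, h₂, rfl⟩ := ihy
      refine ⟨ω₁ ++ ω₂, ?_, (cs.wordProd_append ω₁ ω₂).symm⟩
      intro i hi
      rcases List.mem_append.mp hi with h | h
      exacts [h₁ i h, h₂ i h]
  | inv x hx ihx =>
      obtain ⟨ω₁, h₁, rfl⟩ := ihx
      exact ⟨ω₁.reverse, fun i hi => h₁ i (List.mem_reverse.mp hi),
        (cs.wordProd_reverse ω₁).symm⟩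

lemma exists_reduced_word_subset :
    ∀ (n : ℕ) (ω : List B), ω.length = n →
    ∃ ω' : List B, cs.IsReduced ω' ∧ (∀ i ∈ ω', i ∈ ω) ∧ π ω' = π ω := by
  intro n
  induction n using Nat.strong_induction_on with
  | _ n ih =>
    intro ω hn
    by_cases hred : cs.IsReduced ω
    · exact ⟨ω, hred, fun i hi => hi, rfl⟩
    · have hωlen : 1 ≤ ω.length := by
        rcases ω with _ | ⟨i, ω⟩
        · exact absurd (show cs.IsReduced ([] : List B) by
            show cs.length (π ([] : List B)) = _
            simp) hred
        · simp
      have hex : ∃ k, ¬ cs.IsReduced (ω.take (k+1)) :=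
        ⟨ω.length - 1, by
          rw [show ω.length - 1 + 1 = ω.length by omega, List.take_length]; exact hred⟩
      set k := Nat.find hex with hkdef
      have hknot : ¬ cs.IsReduced (ω.take (k+1)) := Nat.find_spec hex
      have hkle : k ≤ ω.length - 1 := Nat.find_le (by
        rw [show ω.length - 1 + 1 = ω.length by omega, List.take_length]; exact hred)
      have hklt : k < ω.length := by omega
      have hkmin : ∀ k' < k, cs.IsReduced (ω.take (k'+1)) :=
        fun k' h' => not_not.mp (Nat.find_min hex h')
      have hτred : cs.IsReduced (ω.take k) := by
        rcases Nat.eq_zero_or_pos k with h0 | hpos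
        · rw [h0]
          show cs.length (π (ω.take 0)) = _
          simp
        · have h5 := hkmin (k-1) (by omega)
          rwa [show k - 1 + 1 = k by omega] at h5
      have htake : ω.take (k+1) = ω.take k ++ [ω[k]] := by
        rw [List.take_succ, List.getElem?_eq_getElem hklt]
        rfl
      have hlen_take : (ω.take k).length = k := by
        rw [List.length_take]; omega
      have hℓτ : cs.length (π (ω.take k)) = k := by
        have h' : cs.length (π (ω.take k)) = (ω.take k).length := hτred
        rw [h', hlen_take]
      have hkpos : 0 < k := by
        rcases Nat.eq_zero_or_pos k with h0 | h
        · exfalso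
          apply hknot
          rw [h0]
          have h1 : ω.take 1 = [ω[0]] := by
            rw [List.take_succ, List.take_zero, List.getElem?_eq_getElem (by omega)]
            rfl
          show cs.length (π (ω.take (0+1))) = (ω.take (0+1)).length
          rw [show (0:ℕ)+1 = 1 from rfl, h1, cs.wordProd_singleton, cs.length_simple]
          rfl
        · exact h
      have hdesc : cs.length (π (ω.take k) * cs.simple ω[k]) < cs.length (π (ω.take k)) := by
        have hne : cs.length (π (ω.take k) * cs.simple ω[k]) ≠ k + 1 := by
          intro heq
          apply hknot
          show cs.length (π (ω.take (k+1))) = (ω.take (k+1)).length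
          rw [htake, cs.wordProd_append, cs.wordProd_singleton, heq, List.length_append,
            hlen_take]
          rfl
        rcases cs.length_mul_simple (π (ω.take k)) ω[k] with hc | hc
        · rw [hℓτ] at hc; omega
        · rw [hℓτ] at hc ⊢; omega
      obtain ⟨j, hjlt, hjer⟩ := right_exchange cs hτred hdesc
      set ω'' := (ω.take k).eraseIdx j ++ ω.drop (k+1) with hω''def
      have hπω'' : π ω'' = π ω := by
        have h6 : π ω = π (ω.take (k+1)) * π (ω.drop (k+1)) := by
          rw [← cs.wordProd_append, List.take_append_drop]
        rw [hω''def, cs.wordProd_append, ← hjer, h6, htake, cs.wordProd_append,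
          cs.wordProd_singleton]
      have hlen'' : ω''.length < n := by
        rw [hω''def, List.length_append, List.length_eraseIdx, if_pos hjlt]
        rw [hlen_take] at hjlt ⊢
        rw [List.length_drop]
        omega
      have hsub : ∀ i ∈ ω'', i ∈ ω := by
        intro i hi
        rcases List.mem_append.mp hi with h | h
        · exact ((List.eraseIdx_sublist _ j).trans (List.take_sublist _ _)).subset h
        · exact (List.drop_sublist _ _).subset h
      obtain ⟨ω', hred', hsub', hπ'⟩ := ih ω''.length hlen'' ω'' rfl
      exact ⟨ω', hred', fun i hi => hsub i (hsub' i hi), by rw [hπ', hπω'']⟩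

lemma exists_reduced_word_mem {P : Set B} {w : W}
    (hw : w ∈ Subgroup.closure (cs.simple '' P)) :
    ∃ ω : List B, cs.IsReduced ω ∧ (∀ i ∈ ω, i ∈ P) ∧ w = π ω := by
  obtain ⟨ω, hP, rfl⟩ := exists_word_of_mem_closure cs hw
  obtain ⟨ω', h1, h2, h3⟩ := exists_reduced_word_subset cs ω.length ω rfl
  exact ⟨ω', h1, fun i hi => hP i (h2 i hi), h3.symm⟩

end Words


section Additivity

variable {B W : Type*} [Group W] {M : CoxeterMatrix B} (cs : CoxeterSystem M W)

local prefix:100 "π" => cs.wordProd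

lemma length_mul_of_min (d : W) (Q : Set B)
    (h : ∀ q ∈ Subgroup.closure (cs.simple '' Q), cs.length d ≤ cs.length (d * q)) :
    ∀ u ∈ Subgroup.closure (cs.simple '' Q),
      cs.length (d * u) = cs.length d + cs.length u := by
  have main : ∀ (ω : List B), cs.IsReduced ω → (∀ i ∈ ω, i ∈ Q) →
      cs.length (d * π ω) = cs.length d + ω.length := by
    intro ω
    induction ω using List.reverseRecOn with
    | nil => intro _ _; simp
    | append_singleton ω j ih =>
        intro hred hQ
        have hω : cs.IsReduced ω := by
          have h5 := hred.take ω.length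
          rwa [List.take_left] at h5
        have hQω : ∀ i ∈ ω, i ∈ Q := fun i hi => hQ i (List.mem_append_left _ hi)
        have ihω := ih hω hQω
        rw [cs.wordProd_append, cs.wordProd_singleton, List.length_append,
          List.length_singleton, ← mul_assoc]
        rcases cs.length_mul_simple (d * π ω) j with hc | hc
        · rw [hc, ihω]; omega
        · exfalso
          have hdesc : cs.length ((d * π ω) * cs.simple j) < cs.length (d * π ω) := by
            have hne := cs.length_mul_simple_ne (d * π ω) j
            omega
          obtain ⟨ωd, hωdred, hωdeq⟩ := cs.exists_reduced_word' d
          have hωdlen : ωd.length = cs.length d := by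
            have h5 : cs.length (π ωd) = ωd.length := hωdred
            rw [← hωdeq] at h5
            exact h5.symm
          have hcat_red : cs.IsReduced (ωd ++ ω) := by
            show cs.length (π (ωd ++ ω)) = _
            rw [cs.wordProd_append, ← hωdeq, List.length_append, ihω, hωdlen]
          have hdesc' : cs.length (π (ωd ++ ω) * cs.simple j) < cs.length (π (ωd ++ ω)) := by
            rw [cs.wordProd_append, ← hωdeq]
            exact hdesc
          obtain ⟨k, hk, hkeq⟩ := right_exchange cs hcat_red hdesc'
          rw [cs.wordProd_append, ← hωdeq] at hkeq
          rcases lt_or_ge k ωd.length with hkd | hkd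
          · rw [List.eraseIdx_append_of_lt_length hkd, cs.wordProd_append] at hkeq
            have hq : d * (π ω * cs.simple j * (π ω)⁻¹) = π (ωd.eraseIdx k) := by
              calc d * (π ω * cs.simple j * (π ω)⁻¹)
                  = (d * π ω * cs.simple j) * (π ω)⁻¹ := by group
                _ = (π (ωd.eraseIdx k) * π ω) * (π ω)⁻¹ := by rw [hkeq]
                _ = π (ωd.eraseIdx k) := by group
            have hqmem : π ω * cs.simple j * (π ω)⁻¹ ∈ Subgroup.closure (cs.simple '' Q) :=
              mul_mem (mul_mem (wordProd_mem_closure cs hQω)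
                  (Subgroup.subset_closure ⟨j, hQ j (by simp), rfl⟩))
                (inv_mem (wordProd_mem_closure cs hQω))
            have hle := h _ hqmem
            rw [hq] at hle
            have hle2 := cs.length_wordProd_le (ωd.eraseIdx k)
            rw [List.length_eraseIdx, if_pos hkd] at hle2
            omega
          · rw [List.eraseIdx_append_of_length_le hkd, cs.wordProd_append, ← hωdeq] at hkeq
            rw [mul_assoc] at hkeq
            have hcancel := mul_left_cancel hkeq
            have hle2 := cs.length_wordProd_le (ω.eraseIdx (k - ωd.length))
            rw [← hcancel] at hle2
            have hfull : cs.length (π ω * cs.simple j) = ω.length + 1 := by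
              have h5 : cs.length (π (ω ++ [j])) = (ω ++ [j]).length := hred
              rwa [cs.wordProd_append, cs.wordProd_singleton, List.length_append,
                List.length_singleton] at h5
            have hlee : (ω.eraseIdx (k - ωd.length)).length ≤ ω.length :=
              (List.eraseIdx_sublist ω _).length_le
            omega
  intro u hu
  obtain ⟨ω, hred, hQ, rfl⟩ := exists_reduced_word_mem cs hu
  rw [main ω hred hQ, show cs.length (π ω) = ω.length from hred]

lemma length_mul_of_min' (d : W) (P : Set B)
    (h : ∀ p ∈ Subgroup.closure (cs.simple '' P), cs.length d ≤ cs.length (p * d)) :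
    ∀ x ∈ Subgroup.closure (cs.simple '' P),
      cs.length (x * d) = cs.length x + cs.length d := by
  intro x hx
  have h2 : ∀ q ∈ Subgroup.closure (cs.simple '' P),
      cs.length d⁻¹ ≤ cs.length (d⁻¹ * q) := by
    intro q hq
    have h3 : cs.length (d⁻¹ * q) = cs.length (q⁻¹ * d) := by
      rw [← cs.length_inv]
      congr 1
      simp [mul_inv_rev]
    rw [cs.length_inv, h3]
    exact h q⁻¹ (inv_mem hq)
  have h4 := length_mul_of_min cs d⁻¹ P h2 x⁻¹ (inv_mem hx)
  rw [cs.length_inv, cs.length_inv, show d⁻¹ * x⁻¹ = (x * d)⁻¹ by simp [mul_inv_rev],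
    cs.length_inv] at h4
  omega

end Additivity


section Key

variable {B W : Type*} [Group W] {M : CoxeterMatrix B} (cs : CoxeterSystem M W)

local prefix:100 "π" => cs.wordProd

lemma key_lemma (P Q : Set B) (d : W)
    (hmin : ∀ p ∈ Subgroup.closure (cs.simple '' P),
            ∀ q ∈ Subgroup.closure (cs.simple '' Q),
            cs.length d ≤ cs.length (p * d * q))
    {w : W} (hwP : w ∈ Subgroup.closure (cs.simple '' P))
    (hwc : w ∈ Subgroup.map (MulAut.conj d).toMonoidHom (Subgroup.closure (cs.simple '' Q)))
    {i : B} (hi : i ∈ P) (hdesc : cs.length (cs.simple i * w) < cs.length w) :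
    ∃ j ∈ Q, cs.simple i = d * cs.simple j * d⁻¹ := by
  obtain ⟨u, hu, hud⟩ := hwc
  simp only [MulEquiv.toMonoidHom_eq_coe, MonoidHom.coe_coe, MulAut.conj_apply] at hud
  have h1 : ∀ p ∈ Subgroup.closure (cs.simple '' P), cs.length d ≤ cs.length (p * d) :=
    fun p hp => by simpa using hmin p hp 1 (one_mem _)
  have h2 : ∀ q ∈ Subgroup.closure (cs.simple '' Q), cs.length d ≤ cs.length (d * q) :=
    fun q hq => by simpa using hmin 1 (one_mem _) q hq
  have hAdd1 := length_mul_of_min' cs d P h1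
  have hAdd2 := length_mul_of_min cs d Q h2
  have hwd : w * d = d * u := by rw [← hud]; group
  have hlwd : cs.length (w * d) = cs.length w + cs.length d := hAdd1 w hwP
  have hldu : cs.length (d * u) = cs.length d + cs.length u := hAdd2 u hu
  obtain ⟨ωu, hωured, hωuQ, hueq⟩ := exists_reduced_word_mem cs hu
  obtain ⟨ωd, hωdred, hωdeq⟩ := cs.exists_reduced_word' d
  have hωulen : ωu.length = cs.length u := by
    have h5 : cs.length (π ωu) = ωu.length := hωured
    rw [← hueq] at h5
    exact h5.symm
  have hωdlen : ωd.length = cs.length d := by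
    have h5 : cs.length (π ωd) = ωd.length := hωdred
    rw [← hωdeq] at h5
    exact h5.symm
  set σ := ωu.reverse ++ ωd.reverse with hσdef
  have hσprod : π σ = u⁻¹ * d⁻¹ := by
    rw [hσdef, cs.wordProd_append, cs.wordProd_reverse, cs.wordProd_reverse, ← hueq, ← hωdeq]
  have hσlen : σ.length = cs.length u + cs.length d := by
    rw [hσdef, List.length_append, List.length_reverse, List.length_reverse, hωulen, hωdlen]
  have hσred : cs.IsReduced σ := by
    show cs.length (π σ) = σ.length
    rw [hσprod, hσlen, show u⁻¹ * d⁻¹ = (d * u)⁻¹ by simp [mul_inv_rev], cs.length_inv, hldu]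
    omega
  have hrdesc : cs.length (π σ * cs.simple i) < cs.length (π σ) := by
    rw [hσprod]
    have he1 : u⁻¹ * d⁻¹ * cs.simple i = (cs.simple i * (d * u))⁻¹ := by
      rw [mul_inv_rev, mul_inv_rev, cs.inv_simple]
    rw [he1, cs.length_inv, show u⁻¹ * d⁻¹ = (d * u)⁻¹ by simp [mul_inv_rev], cs.length_inv]
    rw [← hwd]
    have hb : cs.length (cs.simple i * (w * d)) ≤ cs.length (cs.simple i * w) + cs.length d := by
      rw [← mul_assoc]
      exact cs.length_mul_le _ _
    rw [hlwd]
    omega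
  obtain ⟨k, hk, hkeq⟩ := right_exchange cs hσred hrdesc
  rw [hσprod] at hkeq
  rcases lt_or_ge k ωu.reverse.length with hku | hku
  · rw [hσdef, List.eraseIdx_append_of_lt_length hku, cs.wordProd_append,
      cs.wordProd_reverse, ← hωdeq] at hkeq
    set e := π (ωu.reverse.eraseIdx k) with hedef
    have hv : d⁻¹ * cs.simple i * d = u * e := by
      calc d⁻¹ * cs.simple i * d
          = u * ((u⁻¹ * d⁻¹ * cs.simple i) * d) := by group
        _ = u * ((e * d⁻¹) * d) := by rw [hkeq]
        _ = u * e := by group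
    have heQ : e ∈ Subgroup.closure (cs.simple '' Q) := by
      rw [hedef]
      apply wordProd_mem_closure
      intro i' hi'
      exact hωuQ i' (List.mem_reverse.mp ((List.eraseIdx_sublist _ k).subset hi'))
    have hvQ : u * e ∈ Subgroup.closure (cs.simple '' Q) := mul_mem hu heQ
    have hlen_dv : cs.length (d * (u * e)) = cs.length d + cs.length (u * e) := hAdd2 _ hvQ
    have hdv : d * (u * e) = cs.simple i * d := by rw [← hv]; group
    have hsd : cs.length (cs.simple i * d) = cs.length d + 1 := by
      have hge := h1 (cs.simple i) (Subgroup.subset_closure ⟨i, hi, rfl⟩)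
      have hne := cs.length_simple_mul_ne d i
      rcases cs.length_simple_mul d i with hc | hc
      · exact hc
      · omega
    have hlv1 : cs.length (u * e) = 1 := by
      rw [hdv, hsd] at hlen_dv
      omega
    obtain ⟨ωv, hωvred, hωvQ, hveq⟩ := exists_reduced_word_mem cs hvQ
    have hωvlen : ωv.length = 1 := by
      have h5 : cs.length (π ωv) = ωv.length := hωvred
      rw [← hveq, hlv1] at h5
      exact h5.symm
    obtain ⟨j, hj⟩ := List.length_eq_one_iff.mp hωvlen
    refine ⟨j, hωvQ j (by rw [hj]; simp), ?_⟩
    have hvj : d⁻¹ * cs.simple i * d = cs.simple j := by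
      rw [hv, hveq, hj, cs.wordProd_singleton]
    calc cs.simple i = d * (d⁻¹ * cs.simple i * d) * d⁻¹ := by group
      _ = d * cs.simple j * d⁻¹ := by rw [hvj]
  · exfalso
    rw [hσdef, List.eraseIdx_append_of_length_le hku, cs.wordProd_append,
      cs.wordProd_reverse, ← hueq] at hkeq
    rw [mul_assoc] at hkeq
    have hcancel := mul_left_cancel hkeq
    have hle := cs.length_wordProd_le (ωd.reverse.eraseIdx (k - ωu.reverse.length))
    rw [← hcancel] at hle
    have hkr : k - ωu.reverse.length < ωd.reverse.length := by
      rw [hσdef, List.length_append] at hk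
      omega
    have hlen_er : (ωd.reverse.eraseIdx (k - ωu.reverse.length)).length
        = ωd.reverse.length - 1 := by
      rw [List.length_eraseIdx, if_pos hkr]
    have hlinv : cs.length (d⁻¹ * cs.simple i) = cs.length (cs.simple i * d) := by
      rw [← cs.length_inv]
      congr 1
      rw [mul_inv_rev, cs.inv_simple]
      group
    have hge := h1 (cs.simple i) (Subgroup.subset_closure ⟨i, hi, rfl⟩)
    rw [hlen_er, List.length_reverse, hωdlen] at hle
    rw [hlinv] at hle
    rw [List.length_reverse, List.length_reverse, hωdlen] at hkr
    omega

end Key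

end KilmoyerAux

/-- (Kilmoyer) Let `W` be a Coxeter group with simple reflections indexed by `B`, and
`P, Q ⊆ B`. If `d` has minimal length in the double coset `W_P d W_Q`, then
`W_P ∩ d W_Q d⁻¹ = W_{P ∩ d(Q)}`, where `P ∩ d(Q)` corresponds to the set of simple
reflections `s_i` with `i ∈ P` that are of the form `d s_j d⁻¹` with `j ∈ Q`. -/
theorem stmt_4 {B W : Type*} [Group W] {M : CoxeterMatrix B}
    (cs : CoxeterSystem M W) (P Q : Set B) (d : W)
    (hmin : ∀ p ∈ Subgroup.closure (cs.simple '' P),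
            ∀ q ∈ Subgroup.closure (cs.simple '' Q),
            cs.length d ≤ cs.length (p * d * q)) :
    Subgroup.closure (cs.simple '' P) ⊓
      Subgroup.map (MulAut.conj d).toMonoidHom (Subgroup.closure (cs.simple '' Q)) =
    Subgroup.closure
      {w : W | ∃ i ∈ P, ∃ j ∈ Q, w = cs.simple i ∧
        cs.simple i = d * cs.simple j * d⁻¹} := by
  apply le_antisymm
  · intro w hw
    obtain ⟨hwP0, hwc0⟩ := Subgroup.mem_inf.mp hw
    have main : ∀ (n : ℕ) (w : W), cs.length w = n →
        w ∈ Subgroup.closure (cs.simple '' P) →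
        w ∈ Subgroup.map (MulAut.conj d).toMonoidHom (Subgroup.closure (cs.simple '' Q)) →
        w ∈ Subgroup.closure
          {w : W | ∃ i ∈ P, ∃ j ∈ Q, w = cs.simple i ∧
            cs.simple i = d * cs.simple j * d⁻¹} := by
      intro n
      induction n using Nat.strong_induction_on with
      | _ n ih =>
        intro w hlen hwP hwc
        rcases eq_or_ne w 1 with rfl | hne
        · exact one_mem _
        obtain ⟨ω, hred, hPω, hweq⟩ := KilmoyerAux.exists_reduced_word_mem cs hwP
        rcases ω with _ | ⟨i, ω'⟩
        · exact absurd (by rw [hweq, cs.wordProd_nil]) hne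
        have hi : i ∈ P := hPω i (List.mem_cons_self)
        have hsw : cs.simple i * w = cs.wordProd ω' := by
          rw [hweq, cs.wordProd_cons, cs.simple_mul_simple_cancel_left]
        have hdesc : cs.length (cs.simple i * w) < cs.length w := by
          have h5 : cs.length (cs.wordProd (i :: ω')) = (i :: ω').length := hred
          have h6 := cs.length_wordProd_le ω'
          rw [hsw, hweq, h5]
          simpa using Nat.lt_succ_of_le h6
        obtain ⟨j, hj, hconj⟩ := KilmoyerAux.key_lemma cs P Q d hmin hwP hwc hi hdesc
        have hsiP : cs.simple i ∈ Subgroup.closure (cs.simple '' P) :=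
          Subgroup.subset_closure ⟨i, hi, rfl⟩
        have hsiC : cs.simple i ∈ Subgroup.map (MulAut.conj d).toMonoidHom
            (Subgroup.closure (cs.simple '' Q)) := by
          refine ⟨cs.simple j, Subgroup.subset_closure ⟨j, hj, rfl⟩, ?_⟩
          simp only [MulEquiv.toMonoidHom_eq_coe, MonoidHom.coe_coe, MulAut.conj_apply]
          exact hconj.symm
        have hrec := ih (cs.length (cs.simple i * w)) (by omega) (cs.simple i * w) rfl
          (Subgroup.mul_mem _ hsiP hwP)
          (Subgroup.mul_mem _ hsiC hwc)
        have hgen : cs.simple i ∈ Subgroup.closure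
            {w : W | ∃ i ∈ P, ∃ j ∈ Q, w = cs.simple i ∧
              cs.simple i = d * cs.simple j * d⁻¹} :=
          Subgroup.subset_closure ⟨i, hi, j, hj, rfl, hconj⟩
        have hw2 : w = cs.simple i * (cs.simple i * w) :=
          (cs.simple_mul_simple_cancel_left i).symm
        rw [hw2]
        exact Subgroup.mul_mem _ hgen hrec
    exact main (cs.length w) w rfl hwP0 hwc0
  · apply (Subgroup.closure_le _).mpr
    rintro w ⟨i, hi, j, hj, rfl, hconj⟩
    have : cs.simple i ∈ Subgroup.closure (cs.simple '' P) ⊓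
        Subgroup.map (MulAut.conj d).toMonoidHom (Subgroup.closure (cs.simple '' Q)) := by
      apply Subgroup.mem_inf.mpr
      constructor
      · exact Subgroup.subset_closure ⟨i, hi, rfl⟩
      · refine ⟨cs.simple j, Subgroup.subset_closure ⟨j, hj, rfl⟩, ?_⟩
        simp only [MulEquiv.toMonoidHom_eq_coe, MonoidHom.coe_coe, MulAut.conj_apply]
        exact hconj.symm
    exact this
end

section
/- (Langlands combinatorial lemma) Let R be a finite root system in a Euclidean space E with base Δ. Every λ ∈ E can be written uniquely as λ = λ₋ + λ₊ where, for some subset Q ⊆ Δ, λ₋ is a linear combination of the coroots α∨ with α ∈ Q with nonpositive coefficients, and λ₊ satisfies ⟨α, λ₊⟩ = 0 for α ∈ Q and ⟨α, λ₊⟩ > 0 for α ∈ Δ \ Q. -/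
open scoped RealInnerProductSpace


private def stmt13Prop {E : Type*} [NormedAddCommGroup E] [InnerProductSpace ℝ E]
    (Δ : Finset E) (lam : E) (t : Finset E × E × E) : Prop :=
  t.1 ⊆ Δ ∧
  lam = t.2.1 + t.2.2 ∧
  (∃ c : E → ℝ, (∀ α ∈ t.1, c α ≤ 0) ∧
    t.2.1 = ∑ α ∈ t.1, c α • ((2 / ⟪α, α⟫) • α)) ∧
  (∀ α ∈ t.1, ⟪α, t.2.2⟫ = 0) ∧
  (∀ α ∈ Δ, α ∉ t.1 → 0 < ⟪α, t.2.2⟫)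

private lemma stmt13_inner_nonpos {E : Type*} [NormedAddCommGroup E] [InnerProductSpace ℝ E]
    {Δ : Finset E} {lam : E} {y z : Finset E × E × E}
    (hy : stmt13Prop Δ lam y) (hz : stmt13Prop Δ lam z) : ⟪y.2.1, z.2.2⟫ ≤ 0 := by
  obtain ⟨hQ, -, ⟨c, hc, hsum⟩, -, -⟩ := hy
  obtain ⟨-, -, -, hz0, hzpos⟩ := hz
  rw [hsum, sum_inner]
  apply Finset.sum_nonpos
  intro α hα
  rw [real_inner_smul_left, real_inner_smul_left]
  have h1 : c α ≤ 0 := hc α hα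
  have h2 : (0:ℝ) ≤ 2 / ⟪α, α⟫ := div_nonneg (by norm_num) real_inner_self_nonneg
  have h3 : (0:ℝ) ≤ ⟪α, z.2.2⟫ := by
    by_cases hmem : α ∈ z.1
    · exact le_of_eq (hz0 α hmem).symm
    · exact le_of_lt (hzpos α (hQ hα) hmem)
  exact mul_nonpos_iff.2 (Or.inr ⟨h1, mul_nonneg h2 h3⟩)

private lemma stmt13_unique {E : Type*} [NormedAddCommGroup E] [InnerProductSpace ℝ E]
    {Δ : Finset E} {lam : E} {y z : Finset E × E × E}
    (hy : stmt13Prop Δ lam y) (hz : stmt13Prop Δ lam z) : y = z := by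
  have hyz : ⟪y.2.1, z.2.2⟫ ≤ 0 := stmt13_inner_nonpos hy hz
  have hzy : ⟪z.2.1, y.2.2⟫ ≤ 0 := stmt13_inner_nonpos hz hy
  have hyy : ⟪y.2.1, y.2.2⟫ = 0 := by
    have := stmt13_inner_nonpos hy hy
    obtain ⟨-, -, ⟨c, hc, hsum⟩, h0, -⟩ := hy
    rw [hsum, sum_inner]
    apply Finset.sum_eq_zero
    intro α hα
    rw [real_inner_smul_left, real_inner_smul_left, h0 α hα]
    ring
  have hzz : ⟪z.2.1, z.2.2⟫ = 0 := by
    obtain ⟨-, -, ⟨c, hc, hsum⟩, h0, -⟩ := hz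
    rw [hsum, sum_inner]
    apply Finset.sum_eq_zero
    intro α hα
    rw [real_inner_smul_left, real_inner_smul_left, h0 α hα]
    ring
  have hdiff : y.2.1 - z.2.1 = z.2.2 - y.2.2 := by
    have h1 := hy.2.1
    have h2 := hz.2.1
    have : y.2.1 + y.2.2 = z.2.1 + z.2.2 := by rw [← h1, ← h2]
    linear_combination (norm := abel) this
  have hnorm : ‖y.2.1 - z.2.1‖ ^ 2 ≤ 0 := by
    have : ‖y.2.1 - z.2.1‖ ^ 2 = ⟪y.2.1 - z.2.1, z.2.2 - y.2.2⟫ := by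
      rw [← hdiff, ← real_inner_self_eq_norm_sq]
    rw [this, inner_sub_left, inner_sub_right, inner_sub_right]
    linarith
  have ha : y.2.1 = z.2.1 := by
    have : ‖y.2.1 - z.2.1‖ = 0 := by nlinarith [norm_nonneg (y.2.1 - z.2.1)]
    rw [norm_eq_zero, sub_eq_zero] at this
    exact this
  have hb : y.2.2 = z.2.2 := by
    have h1 := hy.2.1
    have h2 := hz.2.1
    rw [ha] at h1
    rw [h1] at h2
    exact (add_left_cancel h2)
  have hQ : y.1 = z.1 := by
    ext α
    constructor
    · intro hα
      by_contra hnz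
      have h1 : ⟪α, y.2.2⟫ = 0 := hy.2.2.2.1 α hα
      have h2 : 0 < ⟪α, z.2.2⟫ := hz.2.2.2.2 α (hy.1 hα) hnz
      rw [← hb] at h2; linarith
    · intro hα
      by_contra hnz
      have h1 : ⟪α, z.2.2⟫ = 0 := hz.2.2.2.1 α hα
      have h2 : 0 < ⟪α, y.2.2⟫ := hy.2.2.2.2 α (hz.1 hα) hnz
      rw [hb] at h2; linarith
  exact Prod.ext hQ (Prod.ext ha hb)


private lemma stmt13_exists {E : Type*} [NormedAddCommGroup E] [InnerProductSpace ℝ E]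
    [FiniteDimensional ℝ E] (Δ : Finset E)
    (hind : LinearIndependent ℝ (fun α : Δ => (α : E))) (lam : E) :
    ∃ t : Finset E × E × E,
      t.1 ⊆ Δ ∧
      lam = t.2.1 + t.2.2 ∧
      (∃ c : E → ℝ, (∀ α ∈ t.1, c α ≤ 0) ∧
        t.2.1 = ∑ α ∈ t.1, c α • ((2 / ⟪α, α⟫) • α)) ∧
      (∀ α ∈ t.1, ⟪α, t.2.2⟫ = 0) ∧
      (∀ α ∈ Δ, α ∉ t.1 → 0 < ⟪α, t.2.2⟫) := by
  classical
  have h0 : ∀ α ∈ Δ, (α : E) ≠ 0 := fun α hα => hind.ne_zero (⟨α, hα⟩ : Δ)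
  have hpos : ∀ α ∈ Δ, (0:ℝ) < ⟪α, α⟫ := by
    intro α hα
    rcases (real_inner_self_nonneg (x := α)).lt_or_eq with h | h
    · exact h
    · exact absurd ((@inner_self_eq_zero ℝ _ _ _ _ α).1 h.symm) (h0 α hα)
  -- the cone K
  set K : Set E := {x | ∀ α ∈ Δ, 0 ≤ ⟪α, x⟫} with hK
  have hKconv : Convex ℝ K := by
    intro x hx y hy a b ha hb _
    intro α hα
    rw [inner_add_right, real_inner_smul_right, real_inner_smul_right]
    have := hx α hα; have := hy α hα
    positivity
  have hKclosed : IsClosed K := by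
    have : K = ⋂ α ∈ Δ, {x : E | 0 ≤ ⟪α, x⟫} := by
      ext x; simp [hK, Set.mem_iInter]
    rw [this]
    exact isClosed_biInter fun α _ =>
      isClosed_le continuous_const (Continuous.inner continuous_const continuous_id)
  have hKne : K.Nonempty := ⟨0, fun α _ => by simp⟩
  obtain ⟨p, hpK, hp⟩ :=
    exists_norm_eq_iInf_of_complete_convex hKne (hKclosed.isComplete) hKconv lam
  rw [norm_eq_iInf_iff_real_inner_le_zero hKconv hpK] at hp
  -- cone manipulations
  have hKsmul : ∀ t : ℝ, 0 ≤ t → ∀ x ∈ K, t • x ∈ K := by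
    intro t ht x hx α hα
    rw [real_inner_smul_right]
    exact mul_nonneg ht (hx α hα)
  have hKadd : ∀ x ∈ K, ∀ y ∈ K, x + y ∈ K := by
    intro x hx y hy α hα
    rw [inner_add_right]
    exact add_nonneg (hx α hα) (hy α hα)
  have horth : ⟪lam - p, p⟫ = 0 := by
    have h2 : ⟪lam - p, (2:ℝ) • p - p⟫ ≤ 0 := hp _ (hKsmul 2 (by norm_num) p hpK)
    have h0' : ⟪lam - p, (0:E) - p⟫ ≤ 0 := hp 0 (fun α _ => by simp)
    have e2 : (2:ℝ) • p - p = p := by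
      rw [two_smul]; abel
    rw [e2] at h2
    rw [zero_sub, inner_neg_right] at h0'
    linarith
  have hKle : ∀ w ∈ K, ⟪lam - p, w⟫ ≤ 0 := by
    intro w hw
    have := hp (w + p) (hKadd w hw p hpK)
    simpa using this
  -- λ - p is a nonpositive combination of Δ
  set S : Set E := {x | ∃ d : E → ℝ, (∀ α ∈ Δ, d α ≤ 0) ∧ x = ∑ α ∈ Δ, d α • α} with hS
  have hSmem : lam - p ∈ S := by
    by_contra hns
    -- S is the image of a closed convex set under an injective linear map
    set L : (Δ → ℝ) →ₗ[ℝ] E := Fintype.linearCombination ℝ (fun α : Δ => (α : E)) with hL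
    have hLker : LinearMap.ker L = ⊥ := by
      rw [LinearMap.ker_eq_bot']
      intro g hg
      have := Fintype.linearIndependent_iff.1 hind g
        (by simpa [hL, Fintype.linearCombination_apply] using hg)
      funext i; exact this i
    set C : Set (Δ → ℝ) := {d | ∀ i, d i ≤ 0} with hC
    have hCclosed : IsClosed C := by
      have : C = ⋂ i, {d : Δ → ℝ | d i ≤ 0} := by ext d; simp [hC]
      rw [this]
      exact isClosed_iInter fun i => isClosed_le (continuous_apply i) continuous_const
    have hCconv : Convex ℝ C := by
      intro x hx y hy a b ha hb _
      intro i
      have := hx i; have := hy i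
      have : a * x i ≤ 0 := mul_nonpos_iff.2 (Or.inl ⟨ha, hx i⟩)
      have : b * y i ≤ 0 := mul_nonpos_iff.2 (Or.inl ⟨hb, hy i⟩)
      simp only [Pi.add_apply, Pi.smul_apply, smul_eq_mul]
      linarith
    have hSeq : S = L '' C := by
      ext x
      constructor
      · rintro ⟨d, hd, rfl⟩
        refine ⟨fun i => d i, fun i => hd i i.2, ?_⟩
        simp only [hL, Fintype.linearCombination_apply]
        rw [← Finset.sum_attach Δ (fun α => d α • α)]
        rfl
      · rintro ⟨g, hg, rfl⟩
        refine ⟨fun α => if h : α ∈ Δ then g ⟨α, h⟩ else 0, fun α hα => by simp only [dif_pos hα]; exact hg _, ?_⟩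
        simp only [hL, Fintype.linearCombination_apply]
        rw [← Finset.sum_attach Δ]
        apply Finset.sum_congr rfl
        intro i _
        simp [i.2]
    have hSclosed : IsClosed S := by
      rw [hSeq]
      exact (LinearMap.isClosedEmbedding_of_injective hLker).isClosedMap C hCclosed
    have hSconv : Convex ℝ S := by
      rw [hSeq]
      exact hCconv.is_linear_image L.isLinear
    obtain ⟨f, u, hfS, hfx⟩ := geometric_hahn_banach_closed_point hSconv hSclosed hns
    have hS0 : (0:E) ∈ S := ⟨0, fun _ _ => le_refl 0, by simp⟩
    have hu : 0 < u := by simpa using hfS 0 hS0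
    have hfa : ∀ a ∈ S, f a ≤ 0 := by
      intro a ha
      by_contra hfa
      push_neg at hfa
      have hta : ∀ t : ℝ, 0 ≤ t → t • a ∈ S := by
        intro t ht
        obtain ⟨d, hd, rfl⟩ := ha
        refine ⟨fun α => t * d α, fun α hα => mul_nonpos_iff.2 (Or.inl ⟨ht, hd α hα⟩), ?_⟩
        rw [Finset.smul_sum]
        apply Finset.sum_congr rfl
        intro α _
        rw [smul_smul]
      have := hfS ((u / f a + 1) • a) (hta _ (by positivity))
      rw [map_smul, smul_eq_mul] at this
      have hfau : (u / f a + 1) * f a = u + f a := by field_simp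
      rw [hfau] at this
      linarith
    set y : E := (InnerProductSpace.toDual ℝ E).symm f with hy
    have hyx : ∀ x : E, ⟪y, x⟫ = f x := fun x => InnerProductSpace.toDual_symm_apply
    have hyK : y ∈ K := by
      intro α hα
      have : -α ∈ S := ⟨fun β => if β = α then -1 else 0, fun β hβ => by by_cases h : β = α <;> simp [h], by
        rw [Finset.sum_eq_single α]
        · simp
        · intro β hβ hne; simp [hne]
        · intro h; exact absurd hα h⟩
      have h1 : f (-α) ≤ 0 := hfa _ this
      rw [map_neg] at h1
      rw [real_inner_comm, hyx]
      linarith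
    have h1 : ⟪lam - p, y⟫ ≤ 0 := hKle y hyK
    have h2 : f (lam - p) = ⟪y, lam - p⟫ := (hyx _).symm
    rw [real_inner_comm] at h1
    rw [h2] at hfx
    linarith
  obtain ⟨d, hd, hdsum⟩ := hSmem
  -- each term in the orthogonality relation vanishes
  have hterm : ∀ α ∈ Δ, d α * ⟪α, p⟫ = 0 := by
    have hsum0 : ∑ α ∈ Δ, d α * ⟪α, p⟫ = 0 := by
      have : ⟪lam - p, p⟫ = ∑ α ∈ Δ, d α * ⟪α, p⟫ := by
        rw [hdsum, sum_inner]
        exact Finset.sum_congr rfl fun α _ => real_inner_smul_left _ _ _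
      rw [← this, horth]
    intro α hα
    have hnonpos : ∀ β ∈ Δ, d β * ⟪β, p⟫ ≤ 0 := fun β hβ =>
      mul_nonpos_iff.2 (Or.inr ⟨hd β hβ, hpK β hβ⟩)
    exact (Finset.sum_eq_zero_iff_of_nonpos hnonpos).1 hsum0 α hα
  -- build the triple
  set Q : Finset E := Δ.filter (fun α => ⟪α, p⟫ = 0) with hQ
  have hQsub : Q ⊆ Δ := Finset.filter_subset _ _
  refine ⟨(Q, lam - p, p), hQsub, by show lam = (lam - p) + p; rw [sub_add_cancel], ?_, ?_, ?_⟩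
  · refine ⟨fun α => d α * (⟪α, α⟫ / 2), ?_, ?_⟩
    · intro α hα
      have hαΔ : α ∈ Δ := hQsub hα
      have hnn : (0:ℝ) ≤ ⟪α, α⟫ / 2 := by
        have : (0:ℝ) ≤ ⟪α, α⟫ := real_inner_self_nonneg
        linarith
      exact mul_nonpos_iff.2 (Or.inr ⟨hd α hαΔ, hnn⟩)
    · have e1 : ∀ α ∈ Δ, (d α * (⟪α, α⟫ / 2)) • ((2 / ⟪α, α⟫) • α) = d α • α := by
        intro α hα
        rw [smul_smul]
        congr 1
        have hne : ⟪α, α⟫ ≠ 0 := ne_of_gt (hpos α hα)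
        field_simp
      have e2 : ∑ α ∈ Q, (d α * (⟪α, α⟫ / 2)) • ((2 / ⟪α, α⟫) • α)
          = ∑ α ∈ Δ, (d α * (⟪α, α⟫ / 2)) • ((2 / ⟪α, α⟫) • α) := by
        apply Finset.sum_subset hQsub
        intro α hα hnq
        have hne : ⟪α, p⟫ ≠ 0 := by
          intro h
          exact hnq (Finset.mem_filter.2 ⟨hα, h⟩)
        have hd0 : d α = 0 := by
          rcases mul_eq_zero.1 (hterm α hα) with h | h
          · exact h
          · exact absurd h hne
        simp [hd0]
      rw [hdsum, e2]
      exact (Finset.sum_congr rfl fun α hα => e1 α hα).symm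
  · intro α hα
    exact (Finset.mem_filter.1 hα).2
  · intro α hα hnq
    have hne : ⟪α, p⟫ ≠ 0 := fun h => hnq (Finset.mem_filter.2 ⟨hα, h⟩)
    exact lt_of_le_of_ne (hpK α hα) (Ne.symm hne)

/-- (Langlands' combinatorial lemma) Let `Δ` be the base of a finite root system in a Euclidean
space `E` (a linearly independent set with pairwise non-positive inner products; the coroot of
`α` is `α∨ = (2/⟪α,α⟫) α`). Every `λ ∈ E` can be written uniquely as `λ = λ₋ + λ₊` where, for
some subset `Q ⊆ Δ`, `λ₋` is a linear combination of the coroots `α∨` with `α ∈ Q` with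
nonpositive coefficients, and `λ₊` satisfies `⟪α, λ₊⟫ = 0` for `α ∈ Q` and `⟪α, λ₊⟫ > 0` for
`α ∈ Δ \ Q`; the subset `Q` is also uniquely determined. -/
theorem stmt_13 {E : Type*} [NormedAddCommGroup E] [InnerProductSpace ℝ E]
    [FiniteDimensional ℝ E]
    (Δ : Finset E)
    (hind : LinearIndependent ℝ (fun α : Δ => (α : E)))
    (hobtuse : ∀ α ∈ Δ, ∀ β ∈ Δ, α ≠ β → ⟪α, β⟫ ≤ 0)
    (lam : E) :
    ∃! t : Finset E × E × E,
      t.1 ⊆ Δ ∧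
      lam = t.2.1 + t.2.2 ∧
      (∃ c : E → ℝ, (∀ α ∈ t.1, c α ≤ 0) ∧
        t.2.1 = ∑ α ∈ t.1, c α • ((2 / ⟪α, α⟫) • α)) ∧
      (∀ α ∈ t.1, ⟪α, t.2.2⟫ = 0) ∧
      (∀ α ∈ Δ, α ∉ t.1 → 0 < ⟪α, t.2.2⟫) := by
  obtain ⟨t, ht⟩ := stmt13_exists Δ hind lam
  refine ⟨t, ht, fun y hy => ?_⟩
  exact stmt13_unique hy ht
end
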